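/- Let E be the N×K indicator matrix of the orbit partition, with pseudoinverse E† := (Eᵀ * E)⁻¹ * Eᵀ, and define the quotient pair A_∥ := E† * A * E and B_∥ := E† * B. Suppose u : ℝ → ℝ^M is continuous, x : ℝ → ℝ^N satisfies, for every t ∈ ℝ, that x has derivative A.mulVec (x t) + B.mulVec (u t) at t, and x 0 ∈ X_or. Then the reduced state z : ℝ → ℝ^K defined by z t := E†.mulVec (x t) satisfies, for every t ∈ ℝ, that z has derivative A_∥.mulVec (z t) + B_∥.mulVec (u t) at t; i.e., the quotient network state obeys the quotient dynamics ż = A_∥ z + B_∥ u. -/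

import Mathlib

open Matrix

/-- The `N × N` permutation matrix of a permutation `σ` of `Fin N`, with the convention
`(permMat N σ).mulVec x i = x (σ⁻¹ i)`. -/
def permMat (N : ℕ) (σ : Equiv.Perm (Fin N)) : Matrix (Fin N) (Fin N) ℝ :=
  Matrix.of fun i j => if σ j = i then (1 : ℝ) else 0

/-- The group-consensus subspace: vectors that are constant on each orbit of the natural
action of the subgroup `G` of permutations of `Fin N`. -/
def consensusSet (N : ℕ) (G : Subgroup (Equiv.Perm (Fin N))) : Set (Fin N → ℝ) :=
  {x | ∀ i j : Fin N, (∃ σ ∈ G, σ i = j) → x i = x j}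

theorem permMat_mulVec (N : ℕ) (σ : Equiv.Perm (Fin N)) (x : Fin N → ℝ) :
    (permMat N σ).mulVec x = fun i => x (σ⁻¹ i) := by
  ext i
  simp only [permMat, mulVec, dotProduct, of_apply, ite_mul, one_mul, zero_mul]
  rw [Finset.sum_eq_single (σ⁻¹ i)]
  · simp
  · intro b _ hb
    rw [if_neg]
    intro h; exact hb (by simp [← h])
  · simp

theorem ETE_diag (N K : ℕ) (c : Fin N → Fin K) (E : Matrix (Fin N) (Fin K) ℝ)
    (hE : ∀ i k, E i k = if c i = k then 1 else 0) :
    Eᵀ * E = Matrix.diagonal (fun k => ((Finset.univ.filter (fun i => c i = k)).card : ℝ)) := by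
  ext k l
  simp only [Matrix.mul_apply, transpose_apply, hE, Matrix.diagonal, of_apply]
  rcases eq_or_ne k l with rfl | h
  · rw [if_pos rfl]
    have h2 : ∀ i : Fin N, ((if c i = k then (1:ℝ) else 0) * (if c i = k then 1 else 0)) = if c i = k then 1 else 0 := by
      intro i; split_ifs <;> simp
    rw [Finset.sum_congr rfl (fun i _ => h2 i), Finset.sum_boole]
  · rw [if_neg h, Finset.sum_eq_zero]
    intro i _
    rcases eq_or_ne (c i) k with hk | hk
    · rw [if_pos hk, if_neg (hk ▸ h), mul_zero]
    · rw [if_neg hk, zero_mul]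

section counting
variable {N K : ℕ} (G : Subgroup (Equiv.Perm (Fin N))) (c : Fin N → Fin K)
  (hc : ∀ i j : Fin N, (∃ σ ∈ G, σ i = j) ↔ c i = c j)

noncomputable instance instFG {N : ℕ} (G : Subgroup (Equiv.Perm (Fin N))) : Fintype ↥G :=
  Fintype.ofFinite _

noncomputable def fib {N : ℕ} (G : Subgroup (Equiv.Perm (Fin N))) (i j : Fin N) : Finset ↥G :=
  Finset.univ.filter (fun σ : ↥G => (σ : Equiv.Perm (Fin N)) j = i)

include hc in
theorem fib_card_eq (i j : Fin N) (h : c i = c j) : (fib G i j).card = (fib G j j).card := by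
  obtain ⟨τ, hτG, hτ⟩ := (hc j i).mpr h.symm
  apply Finset.card_bij' (fun σ _ => (⟨τ, hτG⟩ : ↥G)⁻¹ * σ) (fun σ _ => (⟨τ, hτG⟩ : ↥G) * σ)
  · intro σ hσ
    simp only [fib, Finset.mem_filter, Finset.mem_univ, true_and] at hσ ⊢
    simp only [Subgroup.coe_mul, InvMemClass.coe_inv, Equiv.Perm.mul_apply, hσ]
    exact (Equiv.symm_apply_eq τ).mpr hτ.symm
  · intro σ hσ
    simp only [fib, Finset.mem_filter, Finset.mem_univ, true_and] at hσ ⊢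
    simp only [Subgroup.coe_mul, Equiv.Perm.mul_apply, hσ, hτ]
  · intro σ _; group
  · intro σ _; group

include hc in
theorem fib_card_zero (i j : Fin N) (h : c i ≠ c j) : (fib G i j).card = 0 := by
  rw [Finset.card_eq_zero]
  ext σ
  simp only [fib, Finset.mem_filter, Finset.mem_univ, true_and, Finset.notMem_empty, iff_false]
  intro hσ
  exact h (((hc j i).mp ⟨σ, σ.2, hσ⟩).symm)

include hc in
theorem card_G_eq (j : Fin N) :
    Fintype.card ↥G =
      (Finset.univ.filter (fun i => c i = c j)).card * (fib G j j).card := by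
  have h1 : (Finset.univ : Finset ↥G).card = ∑ i : Fin N, (fib G i j).card :=
    Finset.card_eq_sum_card_fiberwise (f := fun σ : ↥G => (σ : Equiv.Perm (Fin N)) j)
      (t := Finset.univ) (fun _ _ => Finset.mem_univ _)
  rw [← Finset.card_univ, h1]
  rw [Finset.sum_congr rfl (fun i _ => show (fib G i j).card =
      if c i = c j then (fib G j j).card else 0 by
    rcases eq_or_ne (c i) (c j) with h | h
    · rw [if_pos h]; exact fib_card_eq G c hc i j h
    · rw [if_neg h]; exact fib_card_zero G c hc i j h)]
  rw [Finset.sum_ite, Finset.sum_const, Finset.sum_const_zero, add_zero, smul_eq_mul]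

end counting

section proj
variable {N K : ℕ} (G : Subgroup (Equiv.Perm (Fin N))) (c : Fin N → Fin K)
  (E : Matrix (Fin N) (Fin K) ℝ)

theorem inv_ETE (hsurj : Function.Surjective c)
    (hE : ∀ i k, E i k = if c i = k then 1 else 0) :
    (Eᵀ * E)⁻¹ =
      Matrix.diagonal (fun k => ((Finset.univ.filter (fun i => c i = k)).card : ℝ)⁻¹) := by
  apply Matrix.inv_eq_right_inv
  rw [ETE_diag N K c E hE, Matrix.diagonal_mul_diagonal]
  ext k l
  rcases eq_or_ne k l with rfl | h
  · obtain ⟨i, hi⟩ := hsurj k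
    have hpos : 0 < (Finset.univ.filter (fun i => c i = k)).card :=
      Finset.card_pos.mpr ⟨i, Finset.mem_filter.mpr ⟨Finset.mem_univ _, hi⟩⟩
    rw [Matrix.diagonal_apply_eq, Matrix.one_apply_eq]
    field_simp
  · rw [Matrix.diagonal_apply_ne _ h, Matrix.one_apply_ne h]

theorem Pi_entry (hsurj : Function.Surjective c)
    (hE : ∀ i k, E i k = if c i = k then 1 else 0) :
    E * ((Eᵀ * E)⁻¹ * Eᵀ) = Matrix.of fun i j =>
      if c i = c j then ((Finset.univ.filter (fun i' => c i' = c j)).card : ℝ)⁻¹ else 0 := by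
  rw [inv_ETE c E hsurj hE]
  ext i j
  simp only [Matrix.mul_apply, Matrix.diagonal_mul, transpose_apply, hE, of_apply]
  rw [Finset.sum_eq_single (c i)]
  · rcases eq_or_ne (c i) (c j) with h | h
    · simp [h]
    · simp [h, Ne.symm h]
  · intro k _ hk
    rw [if_neg (Ne.symm hk), zero_mul]
  · simp

theorem Pi_avg (hc : ∀ i j : Fin N, (∃ σ ∈ G, σ i = j) ↔ c i = c j)
    (hsurj : Function.Surjective c)
    (hE : ∀ i k, E i k = if c i = k then 1 else 0) :
    E * ((Eᵀ * E)⁻¹ * Eᵀ) =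
      (Fintype.card ↥G : ℝ)⁻¹ • ∑ σ : ↥G, permMat N (σ : Equiv.Perm (Fin N)) := by
  rw [Pi_entry c E hsurj hE]
  ext i j
  have hsum : (∑ σ : ↥G, permMat N (σ : Equiv.Perm (Fin N))) i j = ((fib G i j).card : ℝ) := by
    rw [Matrix.sum_apply]
    simp only [permMat, of_apply]
    rw [Finset.sum_boole]
    rfl
  simp only [Matrix.smul_apply, hsum, of_apply, smul_eq_mul]
  have hG := card_G_eq G c hc j
  have hfibpos : 0 < (fib G j j).card :=
    Finset.card_pos.mpr ⟨(1 : ↥G), by simp [fib]⟩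
  rcases eq_or_ne (c i) (c j) with h | h
  · rw [if_pos h, fib_card_eq G c hc i j h, hG]
    obtain ⟨i', hi'⟩ := hsurj (c j)
    have hnpos : 0 < (Finset.univ.filter (fun i => c i = c j)).card :=
      Finset.card_pos.mpr ⟨i', Finset.mem_filter.mpr ⟨Finset.mem_univ _, hi'⟩⟩
    rw [Nat.cast_mul]
    rw [mul_inv]
    rw [mul_assoc, inv_mul_cancel₀ (by positivity), mul_one]
  · rw [if_neg h, fib_card_zero G c hc i j h, Nat.cast_zero, mul_zero]

end proj

/-- With `E` the indicator matrix of the orbit partition, pseudoinverse `E† = (Eᵀ * E)⁻¹ * Eᵀ`,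
and quotient pair `A_∥ = E† * A * E`, `B_∥ = E† * B`: if `u` is continuous, `x` solves
`ẋ = Ax + Bu`, and `x 0 ∈ X_or`, then the reduced state `z t = E†.mulVec (x t)` solves the
quotient dynamics `ż = A_∥ z + B_∥ u`. -/
theorem quotient_dynamics (N M K : ℕ) (A : Matrix (Fin N) (Fin N) ℝ)
    (B : Matrix (Fin N) (Fin M) ℝ) (G : Subgroup (Equiv.Perm (Fin N)))
    (hA : ∀ σ ∈ G, permMat N σ * A = A * permMat N σ)
    (hB : ∀ σ ∈ G, permMat N σ * B = B)
    (c : Fin N → Fin K)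
    (hc : ∀ i j : Fin N, (∃ σ ∈ G, σ i = j) ↔ c i = c j)
    (hsurj : Function.Surjective c)
    (E : Matrix (Fin N) (Fin K) ℝ)
    (hE : ∀ (i : Fin N) (k : Fin K), E i k = if c i = k then 1 else 0)
    (u : ℝ → Fin M → ℝ) (hu : Continuous u)
    (x : ℝ → Fin N → ℝ)
    (hx : ∀ t : ℝ, HasDerivAt x (A.mulVec (x t) + B.mulVec (u t)) t)
    (hx0 : x 0 ∈ consensusSet N G) :
    ∀ t : ℝ, HasDerivAt (fun s => ((Eᵀ * E)⁻¹ * Eᵀ).mulVec (x s))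
      ((((Eᵀ * E)⁻¹ * Eᵀ) * A * E).mulVec (((Eᵀ * E)⁻¹ * Eᵀ).mulVec (x t)) +
        (((Eᵀ * E)⁻¹ * Eᵀ) * B).mulVec (u t)) t := by
  classical
  set P : Matrix (Fin N) (Fin N) ℝ := E * ((Eᵀ * E)⁻¹ * Eᵀ) with hP
  have hPavg := Pi_avg G c E hc hsurj hE
  have hcardpos : (0 : ℝ) < (Fintype.card ↥G : ℝ) := by
    exact_mod_cast Fintype.card_pos
  -- P commutes with A
  have hPA : P * A = A * P := by
    rw [hP, hPavg, Matrix.smul_mul, Matrix.mul_smul, Finset.sum_mul, Finset.mul_sum]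
    congr 1
    exact Finset.sum_congr rfl fun σ _ => hA σ σ.2
  -- P * B = B
  have hPB : P * B = B := by
    rw [hP, hPavg, Matrix.smul_mul, Matrix.sum_mul]
    rw [Finset.sum_congr rfl fun σ _ => hB σ.1 σ.2]
    rw [Finset.sum_const, Finset.card_univ, ← Nat.cast_smul_eq_nsmul ℝ, smul_smul,
      inv_mul_cancel₀ (ne_of_gt hcardpos), one_smul]
  -- P fixes x 0
  have hPx0 : P.mulVec (x 0) = x 0 := by
    rw [hP, hPavg]
    have hsum : (∑ σ : ↥G, permMat N (σ : Equiv.Perm (Fin N))).mulVec (x 0) =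
        ∑ σ : ↥G, (permMat N (σ : Equiv.Perm (Fin N))).mulVec (x 0) := by
      ext i
      simp only [Matrix.mulVec, dotProduct, Matrix.sum_apply, Finset.sum_apply,
        Finset.sum_mul]
      rw [Finset.sum_comm]
    rw [Matrix.smul_mulVec, hsum]
    have heach : ∀ σ : ↥G, (permMat N (σ : Equiv.Perm (Fin N))).mulVec (x 0) = x 0 := by
      intro σ
      rw [permMat_mulVec]
      ext i
      exact (hx0 i ((σ : Equiv.Perm (Fin N))⁻¹ i) ⟨(σ : Equiv.Perm (Fin N))⁻¹,
        inv_mem σ.2, rfl⟩).symm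
    rw [Finset.sum_congr rfl fun σ _ => heach σ, Finset.sum_const, Finset.card_univ,
      ← Nat.cast_smul_eq_nsmul ℝ, smul_smul, inv_mul_cancel₀ (ne_of_gt hcardpos), one_smul]
  -- the error function
  set e : ℝ → Fin N → ℝ := fun t => x t - P.mulVec (x t) with he
  have hL : ∀ {P' : ℕ} (Q : Matrix (Fin P') (Fin N) ℝ) (t : ℝ) (d : Fin N → ℝ),
      HasDerivAt x d t → HasDerivAt (fun s => Q.mulVec (x s)) (Q.mulVec d) t := by
    intro P' Q t d hd
    exact (Q.mulVecLin.toContinuousLinearMap.hasFDerivAt.comp_hasDerivAt t hd)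
  have he' : ∀ t, HasDerivAt e (A.mulVec (e t)) t := by
    intro t
    have h1 := hx t
    have h2 := hL P t _ h1
    have h3 := h1.sub h2
    have heq : (A.mulVec (x t) + B.mulVec (u t)) -
        P.mulVec (A.mulVec (x t) + B.mulVec (u t)) = A.mulVec (e t) := by
      rw [Matrix.mulVec_add, Matrix.mulVec_mulVec, Matrix.mulVec_mulVec, hPA, hPB,
        ← Matrix.mulVec_mulVec, he]
      rw [Matrix.mulVec_sub]
      abel
    rw [heq] at h3
    exact h3
  -- uniqueness: e ≡ 0
  have he0 : e 0 = 0 := by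
    rw [he]
    simp only [hPx0]
    exact sub_self _
  have hezero : ∀ t, e t = 0 := by
    intro t
    set L := A.mulVecLin.toContinuousLinearMap with hLdef
    have hlip : ∀ s : ℝ, LipschitzOnWith ‖L‖₊ (fun y : Fin N → ℝ => A.mulVec y) Set.univ := by
      intro s
      exact (L.lipschitz.lipschitzOnWith)
    have hmem : (0 : ℝ) ∈ Set.Ioo (-(|t| + 1)) (|t| + 1) := by
      constructor <;> [nlinarith [abs_nonneg t]; nlinarith [abs_nonneg t]]
    have htmem : t ∈ Set.Ioo (-(|t| + 1)) (|t| + 1) := by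
      constructor <;> [nlinarith [neg_abs_le t]; nlinarith [le_abs_self t]]
    have := ODE_solution_unique_of_mem_Ioo
      (v := fun _ y => A.mulVec y) (s := fun _ => Set.univ) (fun s _ => hlip s) hmem
      (f := e) (g := fun _ => 0)
      (fun s _ => ⟨he' s, trivial⟩)
      (fun s _ => ⟨by simpa [Matrix.mulVec_zero] using (hasDerivAt_const s (0 : Fin N → ℝ)),
        trivial⟩)
      he0
    exact this htmem
  -- conclude
  intro t
  have hfix : E.mulVec ((((Eᵀ * E)⁻¹ * Eᵀ)).mulVec (x t)) = x t := by
    have h2 : x t - P.mulVec (x t) = 0 := hezero t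
    have h3 : P.mulVec (x t) = x t := (sub_eq_zero.mp h2).symm
    rw [hP] at h3
    rw [Matrix.mulVec_mulVec]
    exact h3
  have hd := hL ((Eᵀ * E)⁻¹ * Eᵀ) t _ (hx t)
  have heq : ((Eᵀ * E)⁻¹ * Eᵀ).mulVec (A.mulVec (x t) + B.mulVec (u t)) =
      (((Eᵀ * E)⁻¹ * Eᵀ) * A * E).mulVec (((Eᵀ * E)⁻¹ * Eᵀ).mulVec (x t)) +
        (((Eᵀ * E)⁻¹ * Eᵀ) * B).mulVec (u t) := by
    rw [Matrix.mulVec_add]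
    congr 1
    · calc ((Eᵀ * E)⁻¹ * Eᵀ).mulVec (A.mulVec (x t))
          = (((Eᵀ * E)⁻¹ * Eᵀ) * A).mulVec (x t) :=
            Matrix.mulVec_mulVec _ _ _
        _ = (((Eᵀ * E)⁻¹ * Eᵀ) * A).mulVec
              (E.mulVec ((((Eᵀ * E)⁻¹ * Eᵀ)).mulVec (x t))) := by rw [hfix]
        _ = ((((Eᵀ * E)⁻¹ * Eᵀ) * A) * E).mulVec ((((Eᵀ * E)⁻¹ * Eᵀ)).mulVec (x t)) :=
            Matrix.mulVec_mulVec _ _ _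
    · exact Matrix.mulVec_mulVec _ _ _
  rw [heq] at hd
  exact hd
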